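/- Converse bound for Stein-type exponent: let ρ_n be density operators and σ_n positive semidefinite operators on Hilbert spaces H_n, and let S_n(a) be the likelihood tests with error probabilities α_n(a), β_n(a). If a sequence of tests T_n satisfies limsup α_n[T_n] ≤ ε and there is a real a with limsup α_n(a) > ε, then liminf −(1/n) log β_n[T_n] ≤ a. Consequently B(ε) := sup over tests with limsup α ≤ ε of liminf −(1/n) log β is at most inf{ a : limsup α_n(a) > ε }. -/

import Mathlib

open scoped ComplexOrder
open Filter

/-- The spectral projection of a matrix onto the direct sum of its eigenspaces
corresponding to strictly positive eigenvalues (defined to be `0` if the matrix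
is not Hermitian). -/
noncomputable def posProj {m : Type*} [Fintype m] [DecidableEq m]
    (A : Matrix m m ℂ) : Matrix m m ℂ :=
  if hA : A.IsHermitian then
    (hA.eigenvectorUnitary : Matrix m m ℂ) *
      Matrix.diagonal (fun i => if 0 < hA.eigenvalues i then (1 : ℂ) else 0) *
      star (hA.eigenvectorUnitary : Matrix m m ℂ)
  else 0

/-- The liminf exponential rate `liminf -(1/n) log p n`, with the convention
that the exponent is `+∞` when `p n = 0`. -/
noncomputable def liminfExpRate (p : ℕ → ℝ) : EReal :=
  Filter.liminf (fun n => if p n = 0 then (⊤ : EReal)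
    else ((-(1 / (n : ℝ)) * Real.log (p n) : ℝ) : EReal)) Filter.atTop

set_option linter.unusedSectionVars false

section Helpers
open Matrix
variable {m : Type*} [Fintype m] [DecidableEq m]


lemma psd_diag_nonneg {S : Matrix m m ℂ} (hS : S.PosSemidef) (i : m) :
    0 ≤ S i i := by
  exact hS.diag_nonneg

lemma psd_trace_nonneg {S : Matrix m m ℂ} (hS : S.PosSemidef) :
    0 ≤ S.trace := by
  exact Finset.sum_nonneg fun i _ => psd_diag_nonneg hS i

lemma trace_mul_psd_nonneg {A B : Matrix m m ℂ} (hA : A.PosSemidef) (hB : B.PosSemidef) :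
    0 ≤ ((A * B).trace).re := by
  obtain ⟨C, rfl⟩ : ∃ C : Matrix m m ℂ, A = Cᴴ * C := by
    open scoped MatrixOrder in
    obtain ⟨C, hC⟩ := CStarAlgebra.nonneg_iff_eq_star_mul_self.mp hA.nonneg
    exact ⟨C, hC⟩
  have h : (Cᴴ * C * B).trace = (C * B * Cᴴ).trace := (Matrix.trace_mul_cycle C B Cᴴ).symm
  rw [h]
  have := psd_trace_nonneg (hB.mul_mul_conjTranspose_same C)
  exact (Complex.nonneg_iff.mp this).1

lemma posProj_posSemidef (A : Matrix m m ℂ) : (posProj A).PosSemidef := by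
  rw [posProj]
  split_ifs with hA
  · rw [Matrix.star_eq_conjTranspose]
    exact (Matrix.PosSemidef.diagonal (fun i => by positivity)).mul_mul_conjTranspose_same _
  · exact Matrix.PosSemidef.zero

lemma one_sub_posProj {A : Matrix m m ℂ} (hA : A.IsHermitian) :
    (1 - posProj A).PosSemidef := by
  rw [posProj, dif_pos hA]
  set U : Matrix m m ℂ := (hA.eigenvectorUnitary : Matrix m m ℂ) with hU
  have hUU : U * star U = 1 := Matrix.mem_unitaryGroup_iff.mp hA.eigenvectorUnitary.2
  have key : (1 : Matrix m m ℂ) - U * Matrix.diagonal (fun i => if 0 < hA.eigenvalues i then (1:ℂ) else 0) * star U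
      = U * Matrix.diagonal (fun i => 1 - if 0 < hA.eigenvalues i then (1:ℂ) else 0) * star U := by
    have hd : Matrix.diagonal (fun i => 1 - if 0 < hA.eigenvalues i then (1:ℂ) else 0)
        = 1 - Matrix.diagonal (fun i => if 0 < hA.eigenvalues i then (1:ℂ) else 0) := by
      rw [← Matrix.diagonal_one, ← Matrix.diagonal_sub]
    rw [hd, Matrix.mul_sub, Matrix.mul_one, Matrix.sub_mul, hUU]
  rw [key, Matrix.star_eq_conjTranspose]
  refine (Matrix.PosSemidef.diagonal (fun i => ?_)).mul_mul_conjTranspose_same _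
  split_ifs <;> simp

lemma trace_mul_le_posProj {A T : Matrix m m ℂ}
    (hA : A.IsHermitian) (hT : T.PosSemidef) (hT1 : (1 - T).PosSemidef) :
    ((A * T).trace).re ≤ ((A * posProj A).trace).re := by
  set U : Matrix m m ℂ := (hA.eigenvectorUnitary : Matrix m m ℂ) with hU
  have hUU : U * star U = 1 := Matrix.mem_unitaryGroup_iff.mp hA.eigenvectorUnitary.2
  have hUU' : star U * U = 1 := Matrix.mem_unitaryGroup_iff'.mp hA.eigenvectorUnitary.2
  set D : Matrix m m ℂ := Matrix.diagonal (RCLike.ofReal ∘ hA.eigenvalues) with hD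
  set P' : Matrix m m ℂ := Matrix.diagonal (fun i => if 0 < hA.eigenvalues i then (1:ℂ) else 0)
    with hP'
  set S : Matrix m m ℂ := star U * T * U with hS
  have hspec := hA.spectral_theorem
  rw [Unitary.conjStarAlgAut_apply] at hspec
  have tr_diag : ∀ X : Matrix m m ℂ, (D * X).trace = ∑ i, (hA.eigenvalues i : ℂ) * X i i := by
    intro X
    rw [Matrix.trace]
    refine Finset.sum_congr rfl fun i _ => ?_
    rw [Matrix.diag_apply, hD, Matrix.diagonal_mul]
    rfl
  have hRHS : (A * posProj A).trace = (D * P').trace := by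
    rw [posProj, dif_pos hA, ← hU, ← hP']
    conv_lhs => rw [hspec, ← hU, ← hD]
    simp only [Matrix.mul_assoc]
    rw [← Matrix.mul_assoc (star U) U, hUU', Matrix.one_mul, Matrix.trace_mul_comm U,
      Matrix.mul_assoc, Matrix.mul_assoc, hUU', Matrix.mul_one]
  have hLHS : (A * T).trace = (D * S).trace := by
    conv_lhs => rw [hspec, ← hU, ← hD]
    simp only [Matrix.mul_assoc]
    rw [Matrix.trace_mul_comm U, hS]
    simp only [Matrix.mul_assoc]
  have hSpsd : S.PosSemidef := by
    rw [hS, Matrix.star_eq_conjTranspose]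
    exact hT.conjTranspose_mul_mul_same U
  have hSub : (1 - S).PosSemidef := by
    have e : star U * (1 - T) * U = 1 - S := by
      rw [Matrix.mul_sub, Matrix.mul_one, Matrix.sub_mul, hUU', hS]
    rw [← e, Matrix.star_eq_conjTranspose]
    exact hT1.conjTranspose_mul_mul_same U
  have hlb : ∀ i, 0 ≤ (S i i).re := fun i => (Complex.nonneg_iff.mp (psd_diag_nonneg hSpsd i)).1
  have hub : ∀ i, (S i i).re ≤ 1 := by
    intro i
    have := (Complex.nonneg_iff.mp (psd_diag_nonneg hSub i)).1
    rw [Matrix.sub_apply, Matrix.one_apply_eq] at this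
    simp only [Complex.sub_re, Complex.one_re] at this
    linarith
  rw [hLHS, hRHS, tr_diag, tr_diag, Complex.re_sum, Complex.re_sum]
  refine Finset.sum_le_sum fun i _ => ?_
  rw [Complex.re_ofReal_mul, Complex.re_ofReal_mul, hP', Matrix.diagonal_apply_eq]
  by_cases h : 0 < hA.eigenvalues i
  · rw [if_pos h]
    simpa using mul_le_mul_of_nonneg_left (hub i) h.le
  · rw [if_neg h]
    simp only [Complex.zero_re, mul_zero]
    exact mul_nonpos_of_nonpos_of_nonneg (not_lt.mp h) (hlb i)

lemma sub_real_smul_isHermitian {ρ σ : Matrix m m ℂ} (hρ : ρ.PosSemidef) (hσ : σ.PosSemidef)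
    (c : ℝ) : (ρ - (c:ℂ) • σ).IsHermitian := by
  refine hρ.isHermitian.sub ?_
  have h := hσ.isHermitian
  unfold Matrix.IsHermitian at h ⊢
  rw [Matrix.conjTranspose_smul, h, Complex.star_def, Complex.conj_ofReal]

lemma NP_bound {ρ σ T : Matrix m m ℂ}
    (hρ : ρ.PosSemidef) (hσ : σ.PosSemidef) (hT : T.PosSemidef) (hT1 : (1 - T).PosSemidef)
    {c : ℝ} (hc : 0 ≤ c) :
    (ρ * T).trace.re - (ρ * posProj (ρ - (c:ℂ) • σ)).trace.re ≤ c * ((σ * T).trace.re) := by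
  have hAh : (ρ - (c:ℂ) • σ).IsHermitian := sub_real_smul_isHermitian hρ hσ c
  have expand : ∀ X : Matrix m m ℂ,
      ((ρ - (c:ℂ) • σ) * X).trace.re = (ρ * X).trace.re - c * (σ * X).trace.re := by
    intro X
    rw [Matrix.sub_mul, Matrix.trace_sub, Matrix.smul_mul, Matrix.trace_smul]
    simp [Complex.sub_re, Complex.re_ofReal_mul]
  have key := trace_mul_le_posProj hAh hT hT1
  rw [expand, expand] at key
  have hσP : 0 ≤ (σ * posProj (ρ - (c:ℂ) • σ)).trace.re :=
    trace_mul_psd_nonneg hσ (posProj_posSemidef _)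
  nlinarith [mul_nonneg hc hσP]

lemma alpha_nonneg {ρ P : Matrix m m ℂ} (hρ : ρ.PosSemidef) (hρ1 : ρ.trace = 1)
    (hP1 : (1 - P).PosSemidef) : 0 ≤ 1 - (ρ * P).trace.re := by
  have h := trace_mul_psd_nonneg hρ hP1
  rw [Matrix.mul_sub, Matrix.mul_one, Matrix.trace_sub, hρ1] at h
  simpa using h

end Helpers

/-- Converse bound for the Stein-type exponent: any test sequence with
`limsup αₙ[Tₙ] ≤ ε` has second-kind exponent at most `a` whenever
`limsup αₙ(a) > ε`; consequently `B(ε) ≤ inf {a | limsup αₙ(a) > ε}`. -/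
theorem stein_converse {d : ℕ → Type*} [∀ n, Fintype (d n)] [∀ n, DecidableEq (d n)]
    (ρ σ : ∀ n, Matrix (d n) (d n) ℂ)
    (hρ : ∀ n, (ρ n).PosSemidef) (hρ1 : ∀ n, (ρ n).trace = 1)
    (hσ : ∀ n, (σ n).PosSemidef)
    (ε : ℝ) (hε : ε ∈ Set.Icc (0 : ℝ) 1) :
    (∀ T : ∀ n, Matrix (d n) (d n) ℂ,
      (∀ n, (T n).PosSemidef) → (∀ n, (1 - T n).PosSemidef) →
      Filter.limsup (fun n => (1 - ((ρ n) * (T n)).trace.re : ℝ)) Filter.atTop ≤ ε →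
      ∀ a : ℝ,
        ε < Filter.limsup (fun n =>
            (1 - ((ρ n) * posProj (ρ n - (Real.exp (n * a) : ℂ) • σ n)).trace.re : ℝ))
          Filter.atTop →
        liminfExpRate (fun n => ((σ n) * (T n)).trace.re) ≤ (a : EReal)) ∧
    sSup {z : EReal | ∃ T : ∀ n, Matrix (d n) (d n) ℂ,
        (∀ n, (T n).PosSemidef) ∧ (∀ n, (1 - T n).PosSemidef) ∧
        Filter.limsup (fun n => (1 - ((ρ n) * (T n)).trace.re : ℝ)) Filter.atTop ≤ ε ∧
        z = liminfExpRate (fun n => ((σ n) * (T n)).trace.re)} ≤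
      sInf {x : EReal | ∃ a : ℝ, x = (a : EReal) ∧
        ε < Filter.limsup (fun n =>
            (1 - ((ρ n) * posProj (ρ n - (Real.exp (n * a) : ℂ) • σ n)).trace.re : ℝ))
          Filter.atTop} := by
  have main : ∀ T : ∀ n, Matrix (d n) (d n) ℂ,
      (∀ n, (T n).PosSemidef) → (∀ n, (1 - T n).PosSemidef) →
      Filter.limsup (fun n => (1 - ((ρ n) * (T n)).trace.re : ℝ)) Filter.atTop ≤ ε →
      ∀ a : ℝ,
        ε < Filter.limsup (fun n =>
            (1 - ((ρ n) * posProj (ρ n - (Real.exp (n * a) : ℂ) • σ n)).trace.re : ℝ))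
          Filter.atTop →
        liminfExpRate (fun n => ((σ n) * (T n)).trace.re) ≤ (a : EReal) := by
    intro T hT hT1 hlim a hgt
    set αS : ℕ → ℝ := fun n =>
      1 - ((ρ n) * posProj (ρ n - (Real.exp (n * a) : ℂ) • σ n)).trace.re with hαS
    set αT : ℕ → ℝ := fun n => 1 - ((ρ n) * (T n)).trace.re with hαT
    set β : ℕ → ℝ := fun n => ((σ n) * (T n)).trace.re with hβ
    have hAh : ∀ n, (ρ n - ((Real.exp (n * a) : ℝ) : ℂ) • σ n).IsHermitian := fun n =>
      sub_real_smul_isHermitian (hρ n) (hσ n) _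
    have hαS0 : ∀ n, 0 ≤ αS n := fun n =>
      alpha_nonneg (hρ n) (hρ1 n) (one_sub_posProj (hAh n))
    have hαT1 : ∀ n, αT n ≤ 1 := by
      intro n
      have := trace_mul_psd_nonneg (hρ n) (hT n)
      simp only [hαT]
      linarith
    set L : ℝ := Filter.limsup αS Filter.atTop with hL
    set c : ℝ := (L - ε) / 4 with hc
    have hc0 : 0 < c := by
      rw [hc]; linarith [hgt]
    have hfreq : ∃ᶠ n in Filter.atTop, ε + 2 * c < αS n := by
      refine Filter.frequently_lt_of_lt_limsup
        (Filter.isCoboundedUnder_le_of_le Filter.atTop hαS0) ?_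
      rw [← hL, hc]; linarith [hgt]
    have hev : ∀ᶠ n in Filter.atTop, αT n < ε + c := by
      refine Filter.eventually_lt_of_limsup_lt ?_ (Filter.isBoundedUnder_of ⟨1, hαT1⟩)
      exact lt_of_le_of_lt hlim (by linarith)
    have hNP : ∀ n, αS n - αT n ≤ Real.exp (n * a) * β n := by
      intro n
      have := NP_bound (hρ n) (hσ n) (hT n) (hT1 n) (c := Real.exp (n * a))
        (Real.exp_pos _).le
      simp only [hαS, hαT, hβ]
      linarith
    have hfreq2 : ∃ᶠ n : ℕ in Filter.atTop, c / Real.exp (n * a) ≤ β n := by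
      refine (hfreq.and_eventually hev).mono ?_
      rintro n ⟨h1, h2⟩
      rw [div_le_iff₀ (Real.exp_pos _)]
      have := hNP n
      nlinarith
    by_contra hcon
    push_neg at hcon
    obtain ⟨b, hab, hbl⟩ := EReal.exists_between_coe_real hcon
    have hab' : a < b := by exact_mod_cast hab
    have hfinal : liminfExpRate β ≤ (b : EReal) := by
      rw [liminfExpRate]
      refine Filter.liminf_le_of_frequently_le' ?_
      have hev2 : ∀ᶠ n : ℕ in Filter.atTop,
          (1 : ℝ) ≤ (n : ℝ) ∧ -Real.log c ≤ (b - a) * (n : ℝ) := by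
        have h1 : Filter.Tendsto (fun n : ℕ => ((n : ℝ))) Filter.atTop Filter.atTop :=
          tendsto_natCast_atTop_atTop
        have h2 : Filter.Tendsto (fun n : ℕ => (b - a) * (n : ℝ)) Filter.atTop Filter.atTop :=
          h1.const_mul_atTop (by linarith)
        exact (h1.eventually_ge_atTop 1).and (h2.eventually_ge_atTop (-Real.log c))
      refine (hfreq2.and_eventually hev2).mono ?_
      rintro n ⟨hβn, hn1, hlogn⟩
      have hβpos : 0 < β n := lt_of_lt_of_le (div_pos hc0 (Real.exp_pos _)) hβn
      rw [if_neg (ne_of_gt hβpos)]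
      rw [EReal.coe_le_coe_iff]
      have hn0 : (0 : ℝ) < (n : ℝ) := lt_of_lt_of_le one_pos hn1
      have hlogβ : Real.log c - (n : ℝ) * a ≤ Real.log (β n) := by
        have h3 := Real.log_le_log (div_pos hc0 (Real.exp_pos _)) hβn
        rwa [Real.log_div (ne_of_gt hc0) (ne_of_gt (Real.exp_pos _)),
          Real.log_exp] at h3
      have heq : -(1 / (n : ℝ)) * Real.log (β n) = (-Real.log (β n)) / (n : ℝ) := by
        ring
      rw [heq, div_le_iff₀ hn0]
      nlinarith
    exact absurd hfinal (not_le.mpr hbl)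
  refine ⟨main, ?_⟩
  refine sSup_le ?_
  rintro z ⟨T, hT, hT1, hlim, rfl⟩
  refine le_sInf ?_
  rintro x ⟨a, rfl, hgt⟩
  exact main T hT hT1 hlim a hgt
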